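/- Let φ be the standard Gaussian cdf. For any fixed ε with 0 < ε < 1, φ(√(2 log M)·ε)^M → 0 as M → ∞. -/

import Mathlib

open Real Filter MeasureTheory ProbabilityTheory

/-- The standard Gaussian cumulative distribution function. -/
noncomputable def stdGaussCdf (x : ℝ) : ℝ :=
  (ProbabilityTheory.cdf (ProbabilityTheory.gaussianReal 0 1)) x

lemma tail_lb (x : ℝ) (hx : 0 ≤ x) :
    (Real.sqrt (2 * π))⁻¹ * Real.exp (-(x+1)^2/2) ≤ 1 - stdGaussCdf x := by
  have h1 : (1:NNReal) ≠ 0 := one_ne_zero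
  have hmeas : IsProbabilityMeasure (gaussianReal 0 1) := inferInstance
  have hcdf : stdGaussCdf x = ((gaussianReal 0 1) (Set.Iic x)).toReal :=
    cdf_eq_real _ _
  have hcompl : (gaussianReal 0 1) (Set.Ioi x)
      = 1 - (gaussianReal 0 1) (Set.Iic x) := by
    rw [← Set.compl_Iic, measure_compl measurableSet_Iic (measure_ne_top _ _),
      measure_univ]
  have hIic_le : (gaussianReal 0 1) (Set.Iic x) ≤ 1 := prob_le_one
  have htail : 1 - stdGaussCdf x = ((gaussianReal 0 1) (Set.Ioi x)).toReal := by
    rw [hcdf, hcompl, ENNReal.toReal_sub_of_le hIic_le (by simp)]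
    simp
  rw [htail]
  have hmono : (gaussianReal 0 1) (Set.Ioc x (x+1)) ≤ (gaussianReal 0 1) (Set.Ioi x) :=
    measure_mono Set.Ioc_subset_Ioi_self
  have hIoc : (gaussianReal 0 1) (Set.Ioc x (x+1))
      = ENNReal.ofReal (∫ t in Set.Ioc x (x+1), gaussianPDFReal 0 1 t) :=
    gaussianReal_apply_eq_integral 0 h1 _
  have hintlb : (Real.sqrt (2 * π))⁻¹ * Real.exp (-(x+1)^2/2)
      ≤ ∫ t in Set.Ioc x (x+1), gaussianPDFReal 0 1 t := by
    have : (Real.sqrt (2 * π))⁻¹ * Real.exp (-(x+1)^2/2)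
        = ∫ _t in Set.Ioc x (x+1), (Real.sqrt (2 * π))⁻¹ * Real.exp (-(x+1)^2/2) := by
      rw [setIntegral_const]
      simp
    rw [this]
    apply setIntegral_mono_on
    · exact integrableOn_const measure_Ioc_lt_top.ne
    · exact (integrable_gaussianPDFReal 0 1).integrableOn
    · exact measurableSet_Ioc
    · intro t ht
      simp only [gaussianPDFReal, NNReal.coe_one, mul_one, sub_zero]
      have ht0 : 0 ≤ t := le_trans hx ht.1.le
      have ht1 : t ≤ x + 1 := ht.2
      apply mul_le_mul_of_nonneg_left _ (by positivity)
      apply Real.exp_le_exp.mpr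
      nlinarith
  calc (Real.sqrt (2 * π))⁻¹ * Real.exp (-(x+1)^2/2)
      ≤ ∫ t in Set.Ioc x (x+1), gaussianPDFReal 0 1 t := hintlb
    _ = ((gaussianReal 0 1) (Set.Ioc x (x+1))).toReal := by
        rw [hIoc, ENNReal.toReal_ofReal]
        exact setIntegral_nonneg measurableSet_Ioc fun t _ => gaussianPDFReal_nonneg _ _ _
    _ ≤ ((gaussianReal 0 1) (Set.Ioi x)).toReal :=
        ENNReal.toReal_mono (measure_ne_top _ _) hmono

lemma auxF_tendsto (ε : ℝ) (hε0 : 0 < ε) (hε1 : ε < 1) :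
    Tendsto (fun L : ℝ => (Real.sqrt (2 * π))⁻¹ *
      Real.exp ((1 - ε^2) * L - ε * Real.sqrt (2 * L) - 1/2)) atTop atTop := by
  have ha : 0 < 1 - ε^2 := by nlinarith
  have hg : Tendsto (fun L : ℝ => (1 - ε^2) * L - ε * Real.sqrt (2 * L) - 1/2)
      atTop atTop := by
    apply tendsto_atTop_mono' atTop
      (f₁ := fun L : ℝ => (1 - ε^2)/2 * L - 1/2)
    · filter_upwards [eventually_ge_atTop (max 1 (8 * ε^2 / (1 - ε^2)^2))] with L hL
      have hL1 : (1:ℝ) ≤ L := le_trans (le_max_left _ _) hL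
      have hL2 : 8 * ε^2 / (1 - ε^2)^2 ≤ L := le_trans (le_max_right _ _) hL
      have hL0 : 0 ≤ L := by linarith
      have hsq : Real.sqrt (2 * L) ≤ (1 - ε^2) / (2 * ε) * L := by
        have h2 : 2 * L ≤ ((1 - ε^2) / (2 * ε) * L)^2 := by
          rw [div_le_iff₀ (by positivity)] at hL2
          rw [mul_pow, div_pow, div_mul_eq_mul_div, le_div_iff₀ (by positivity)]
          nlinarith
        calc Real.sqrt (2*L) ≤ Real.sqrt (((1 - ε^2) / (2 * ε) * L)^2) :=
              Real.sqrt_le_sqrt h2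
          _ = (1 - ε^2) / (2 * ε) * L := Real.sqrt_sq (by positivity)
      have : ε * Real.sqrt (2 * L) ≤ (1 - ε^2)/2 * L := by
        calc ε * Real.sqrt (2 * L) ≤ ε * ((1 - ε^2) / (2 * ε) * L) := by
              exact mul_le_mul_of_nonneg_left hsq hε0.le
          _ = (1 - ε^2)/2 * L := by field_simp
      linarith
    · apply tendsto_atTop_add_const_right
      exact Tendsto.const_mul_atTop (by positivity) tendsto_id
  exact Tendsto.const_mul_atTop (by positivity) (Real.tendsto_exp_atTop.comp hg)

/-- for fixed `0 < ε < 1`, `φ(√(2 log M)·ε)^M → 0` as `M → ∞`. -/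
theorem stmt4 (ε : ℝ) (hε0 : 0 < ε) (hε1 : ε < 1) :
    Tendsto (fun M : ℕ => (stdGaussCdf (Real.sqrt (2 * Real.log M) * ε)) ^ M)
      atTop (nhds 0) := by
  set x : ℕ → ℝ := fun M => Real.sqrt (2 * Real.log M) * ε with hxdef
  set δ : ℕ → ℝ := fun M => 1 - stdGaussCdf (x M) with hδdef
  -- M * δ M → ∞
  have hMδ : Tendsto (fun M : ℕ => (M:ℝ) * δ M) atTop atTop := by
    apply tendsto_atTop_mono' atTop
      (f₁ := fun M : ℕ => (Real.sqrt (2 * π))⁻¹ *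
        Real.exp ((1 - ε^2) * Real.log M - ε * Real.sqrt (2 * Real.log M) - 1/2))
    · filter_upwards [eventually_ge_atTop 1] with M hM
      have hM1 : (1:ℝ) ≤ (M:ℝ) := by exact_mod_cast hM
      have hlog : 0 ≤ Real.log M := Real.log_nonneg hM1
      have hx0 : 0 ≤ x M := mul_nonneg (Real.sqrt_nonneg _) hε0.le
      have htail := tail_lb (x M) hx0
      have hexp : (1 - ε^2) * Real.log M - ε * Real.sqrt (2 * Real.log M) - 1/2
          = Real.log M + (-(x M + 1)^2/2) := by
        have hsq : (Real.sqrt (2 * Real.log M))^2 = 2 * Real.log M :=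
          Real.sq_sqrt (by linarith)
        simp only [hxdef]
        nlinarith [hsq]
      calc (Real.sqrt (2 * π))⁻¹ *
            Real.exp ((1 - ε^2) * Real.log M - ε * Real.sqrt (2 * Real.log M) - 1/2)
          = (M:ℝ) * ((Real.sqrt (2 * π))⁻¹ * Real.exp (-(x M + 1)^2/2)) := by
            rw [hexp, Real.exp_add, Real.exp_log (by linarith)]; ring
        _ ≤ (M:ℝ) * δ M := by
            apply mul_le_mul_of_nonneg_left htail (by linarith)
    · exact (auxF_tendsto ε hε0 hε1).comp
        (Real.tendsto_log_atTop.comp tendsto_natCast_atTop_atTop)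
  -- squeeze
  have hub : ∀ M : ℕ, stdGaussCdf (x M) ^ M ≤ Real.exp (-((M:ℝ) * δ M)) := by
    intro M
    have h1 : stdGaussCdf (x M) ≤ Real.exp (-δ M) := by
      have := Real.add_one_le_exp (-δ M)
      simp only [hδdef] at this ⊢
      linarith
    calc stdGaussCdf (x M) ^ M ≤ Real.exp (-δ M) ^ M :=
          pow_le_pow_left₀ (ProbabilityTheory.cdf_nonneg _ _) h1 M
      _ = Real.exp (-((M:ℝ) * δ M)) := by
          rw [← Real.exp_nat_mul]; ring_nf
  have hlim : Tendsto (fun M : ℕ => Real.exp (-((M:ℝ) * δ M))) atTop (nhds 0) :=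
    Real.tendsto_exp_atBot.comp (tendsto_neg_atBot_iff.mpr hMδ)
  exact squeeze_zero (fun M => pow_nonneg (ProbabilityTheory.cdf_nonneg _ _) M) hub hlim
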